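/- Let E be a complex Banach space and A, B, C bounded linear operators on E with C a compact operator. Let z₀ ∈ ℂ and ρ > 0 be such that σ(A) is contained in the open ball B(z₀, ρ) and σ(−B) is disjoint from the closed ball of center z₀ and radius ρ. Then the operator X := −(2πi)^{-1} ∮_{|z−z₀|=ρ} (z·I − A)^{-1} ∘ C ∘ (z·I + B)^{-1} dz is a compact operator on E. -/

import Mathlib

open MeasureTheory

/-- The interval integral of a function valued in a closed submodule lies in the submodule. -/
lemma intervalIntegral_mem_of_closed {F : Type*} [NormedAddCommGroup F] [NormedSpace ℝ F]
    [CompleteSpace F] (p : Submodule ℝ F) (hp : IsClosed (p : Set F)) (f : ℝ → F)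
    (hf : ∀ t, f t ∈ p) (a b : ℝ) : (∫ t in a..b, f t) ∈ p := by
  by_cases hi : IntervalIntegrable f volume a b
  · have : CompleteSpace p := hp.completeSpace_coe
    set g : ℝ → p := fun t => ⟨f t, hf t⟩ with hg
    have hfe : f = (p.subtypeL : p →L[ℝ] F) ∘ g := rfl
    have hemb : Topology.IsEmbedding ((p.subtypeL : p →L[ℝ] F)) :=
      Topology.IsEmbedding.subtypeVal
    have hgi : ∀ s t : ℝ, Integrable f (volume.restrict (Set.Ioc s t)) →
        Integrable g (volume.restrict (Set.Ioc s t)) := by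
      rintro s t ⟨hm, hfin⟩
      refine ⟨hemb.aestronglyMeasurable_comp_iff.mp hm, ?_⟩
      exact hfin
    have hgint : IntervalIntegrable g volume a b := ⟨hgi _ _ hi.1, hgi _ _ hi.2⟩
    have := (p.subtypeL : p →L[ℝ] F).intervalIntegral_comp_comm hgint (a := a) (b := b)
    rw [hfe]
    rw [show (∫ t in a..b, ((p.subtypeL : p →L[ℝ] F) ∘ g) t) =
        ∫ t in a..b, (p.subtypeL : p →L[ℝ] F) (g t) from rfl, this]
    exact (∫ t in a..b, g t).2
  · rw [intervalIntegral.integral_undef hi]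
    exact p.zero_mem

/-- Compactness of the Rosenblum integral solution of a Sylvester equation
with compact right-hand side: if `C` is a compact operator, then
`X := -(2πi)⁻¹ ∮_{|z-z₀|=ρ} (zI-A)⁻¹ ∘ C ∘ (zI+B)⁻¹ dz` is compact. -/
theorem stmt_5 {E : Type*} [NormedAddCommGroup E] [NormedSpace ℂ E] [CompleteSpace E]
    (A B C : E →L[ℂ] E) (hC : IsCompactOperator (⇑C)) (z₀ : ℂ) (ρ : ℝ) (hρ : 0 < ρ)
    (hA : spectrum ℂ A ⊆ Metric.ball z₀ ρ)
    (hB : spectrum ℂ (-B) ∩ Metric.closedBall z₀ ρ = ∅) :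
    IsCompactOperator
      (⇑(-((2 * (Real.pi : ℂ) * Complex.I)⁻¹ •
        ∮ z in C(z₀, ρ), Ring.inverse (algebraMap ℂ (E →L[ℂ] E) z - A) * C *
          Ring.inverse (algebraMap ℂ (E →L[ℂ] E) z + B)))) := by
  set p : Submodule ℝ (E →L[ℂ] E) :=
    (compactOperator (RingHom.id ℂ) E E).restrictScalars ℝ with hpdef
  have hpc : IsClosed (p : Set (E →L[ℂ] E)) := isClosed_setOf_isCompactOperator
  have key : (∮ z in C(z₀, ρ), Ring.inverse (algebraMap ℂ (E →L[ℂ] E) z - A) * C *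
      Ring.inverse (algebraMap ℂ (E →L[ℂ] E) z + B)) ∈ p := by
    rw [circleIntegral]
    refine intervalIntegral_mem_of_closed p hpc _ (fun θ => ?_) _ _
    show IsCompactOperator _
    have h0 : IsCompactOperator
        (⇑(Ring.inverse (algebraMap ℂ (E →L[ℂ] E) (circleMap z₀ ρ θ) - A)) ∘ ⇑C ∘
          ⇑(Ring.inverse (algebraMap ℂ (E →L[ℂ] E) (circleMap z₀ ρ θ) + B))) :=
      (hC.clm_comp _).comp_clm _
    have h1 : IsCompactOperator
        (⇑(Ring.inverse (algebraMap ℂ (E →L[ℂ] E) (circleMap z₀ ρ θ) - A) * C *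
          Ring.inverse (algebraMap ℂ (E →L[ℂ] E) (circleMap z₀ ρ θ) + B))) := by
      exact h0
    simpa using h1.smul (deriv (circleMap z₀ ρ) θ)
  have h1 : IsCompactOperator (⇑((2 * (Real.pi : ℂ) * Complex.I)⁻¹ •
      ∮ z in C(z₀, ρ), Ring.inverse (algebraMap ℂ (E →L[ℂ] E) z - A) * C *
        Ring.inverse (algebraMap ℂ (E →L[ℂ] E) z + B))) := by
    simpa using (key : IsCompactOperator _).smul ((2 * (Real.pi : ℂ) * Complex.I)⁻¹)
  have : (⇑(-((2 * (Real.pi : ℂ) * Complex.I)⁻¹ •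
      ∮ z in C(z₀, ρ), Ring.inverse (algebraMap ℂ (E →L[ℂ] E) z - A) * C *
        Ring.inverse (algebraMap ℂ (E →L[ℂ] E) z + B))) : E → E) =
      -⇑((2 * (Real.pi : ℂ) * Complex.I)⁻¹ •
      ∮ z in C(z₀, ρ), Ring.inverse (algebraMap ℂ (E →L[ℂ] E) z - A) * C *
        Ring.inverse (algebraMap ℂ (E →L[ℂ] E) z + B)) := rfl
  rw [this]
  exact h1.neg
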